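/- Under the hypotheses of the two-field Schur complement bound, every eigenvalue of Ŝ⁻¹ S̃ with Ŝ = (ε/μ)D lies in the interval [1, 1 + α²d/(c₀μ)]. -/

import Mathlib

set_option maxHeartbeats 1000000

open Matrix

private lemma posDef_smul' {N : ℕ} {D : Matrix (Fin N) (Fin N) ℝ} (hD : D.PosDef)
    {c : ℝ} (hc : 0 < c) : (c • D).PosDef := by
  refine posDef_iff_dotProduct_mulVec.mpr ⟨?_, fun x hx => ?_⟩
  · show (c • D)ᴴ = c • D
    rw [conjTranspose_smul, star_trivial, hD.1.eq]
  rw [smul_mulVec, dotProduct_smul, smul_eq_mul]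
  exact mul_pos hc (hD.dotProduct_mulVec_pos hx)

private lemma symm_dot {m : ℕ} {P : Matrix (Fin m) (Fin m) ℝ} (hP : P.IsHermitian)
    (a b : Fin m → ℝ) : a ⬝ᵥ P.mulVec b = b ⬝ᵥ P.mulVec a := by
  rw [dotProduct_mulVec, ← mulVec_transpose, dotProduct_comm,
    show Pᵀ = P from by rw [← conjTranspose_eq_transpose_of_trivial, hP.eq]]

theorem two_field_preconditioned_eigenvalue_bounds {n N : ℕ}
    (A : Matrix (Fin n) (Fin n) ℝ) (M D : Matrix (Fin N) (Fin N) ℝ)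
    (B : Matrix (Fin N) (Fin n) ℝ) (ε μ α c₀ d : ℝ)
    (hA : A.PosDef) (hM : M.PosDef) (hD : D.PosDef)
    (hDM : (D - c₀ • M).PosSemidef)
    (hε : 0 < ε) (hμ : 0 < μ) (hα : 0 < α) (hc₀ : 0 < c₀) (hd : 0 < d)
    (hbound : ∀ u : Fin n → ℝ,
      u ⬝ᵥ (Bᵀ * M⁻¹ * B).mulVec u ≤ d * (u ⬝ᵥ A.mulVec u)) :
    ∀ (lam : ℝ) (v : Fin N → ℝ), v ≠ 0 →
      (((ε / μ) • D)⁻¹ *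
        ((ε / μ) • D + ((α * ε / μ) ^ 2) • (B * (ε • A + Bᵀ * M⁻¹ * B)⁻¹ * Bᵀ))).mulVec v
        = lam • v →
      1 ≤ lam ∧ lam ≤ 1 + α ^ 2 * d / (c₀ * μ) := by
  intro lam v hv heig
  set Sh : Matrix (Fin N) (Fin N) ℝ := (ε / μ) • D with hShdef
  set K : Matrix (Fin n) (Fin n) ℝ := ε • A + Bᵀ * M⁻¹ * B with hKdef
  set c : ℝ := (α * ε / μ) ^ 2 with hcdef
  set T : Matrix (Fin N) (Fin N) ℝ := B * K⁻¹ * Bᵀ with hTdef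
  have hMinv : (M⁻¹).PosDef := hM.inv
  have hA₀ : (Bᵀ * M⁻¹ * B).PosSemidef := by
    have := hMinv.posSemidef.conjTranspose_mul_mul_same B
    simpa using this
  have hεA : (ε • A).PosDef := posDef_smul' hA hε
  have hK : K.PosDef := hεA.add_posSemidef hA₀
  have hKinv : (K⁻¹).PosDef := hK.inv
  have hT : T.PosSemidef := by
    have := hKinv.posSemidef.mul_mul_conjTranspose_same B
    simpa using this
  have hSh : Sh.PosDef := posDef_smul' hD (div_pos hε hμ)
  have hShdet : IsUnit Sh.det := isUnit_iff_ne_zero.mpr hSh.det_pos.ne'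
  have hKdet : IsUnit K.det := isUnit_iff_ne_zero.mpr hK.det_pos.ne'
  have hMdet : IsUnit M.det := isUnit_iff_ne_zero.mpr hM.det_pos.ne'
  -- eigen equation gives S̃ v = lam • Sh v
  have hSv : (Sh + c • T).mulVec v = lam • Sh.mulVec v := by
    have h1 : Sh.mulVec ((Sh⁻¹ * (Sh + c • T)).mulVec v) = Sh.mulVec (lam • v) := by
      rw [heig]
    rwa [mulVec_mulVec, ← Matrix.mul_assoc, Matrix.mul_nonsing_inv _ hShdet,
      Matrix.one_mul, mulVec_smul] at h1
  set q : ℝ := v ⬝ᵥ Sh.mulVec v with hqdef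
  set t : ℝ := v ⬝ᵥ T.mulVec v with htdef
  have hq : 0 < q := by have := hSh.dotProduct_mulVec_pos hv; rwa [star_trivial] at this
  have ht0 : 0 ≤ t := by have := hT.dotProduct_mulVec_nonneg v; rwa [star_trivial] at this
  have hc : 0 < c := by positivity
  have hlamq : q + c * t = lam * q := by
    have h : v ⬝ᵥ (Sh + c • T).mulVec v = v ⬝ᵥ (lam • Sh.mulVec v) := by rw [hSv]
    have e1 : v ⬝ᵥ (Sh + c • T).mulVec v = q + c * t := by
      rw [add_mulVec, dotProduct_add]
      congr 1
      rw [smul_mulVec, dotProduct_smul, smul_eq_mul]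
    have e2 : v ⬝ᵥ (lam • Sh.mulVec v) = lam * q := by
      rw [dotProduct_smul, smul_eq_mul]
    rw [e1, e2] at h
    exact h
  have hct0 : 0 ≤ c * t := mul_nonneg hc.le ht0
  have hlow : 1 ≤ lam := by
    have h1 : 1 * q ≤ lam * q := by rw [one_mul]; linarith
    exact le_of_mul_le_mul_right h1 hq
  refine ⟨hlow, ?_⟩
  -- Now the upper bound.
  set m : ℝ := v ⬝ᵥ M.mulVec v with hmdef
  have hm : 0 < m := by have := hM.dotProduct_mulVec_pos hv; rwa [star_trivial] at this
  -- q ≥ (ε/μ) c₀ m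
  have hqD : q = (ε / μ) * (v ⬝ᵥ D.mulVec v) := by
    rw [hqdef, hShdef, smul_mulVec, dotProduct_smul, smul_eq_mul]
  have hDm : c₀ * m ≤ v ⬝ᵥ D.mulVec v := by
    have := hDM.dotProduct_mulVec_nonneg v
    rw [star_trivial, sub_mulVec, dotProduct_sub, smul_mulVec, dotProduct_smul,
      smul_eq_mul] at this
    linarith
  have hqm : (ε / μ) * (c₀ * m) ≤ q := by
    rw [hqD]
    exact mul_le_mul_of_nonneg_left hDm (le_of_lt (div_pos hε hμ))
  -- t = x ⬝ᵥ K⁻¹ x with x = Bᵀ v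
  set x : Fin n → ℝ := Bᵀ.mulVec v with hxdef
  set w : Fin n → ℝ := (K⁻¹).mulVec x with hwdef
  have htx : t = x ⬝ᵥ w := by
    rw [htdef, hTdef, ← mulVec_mulVec, ← mulVec_mulVec, dotProduct_mulVec,
      ← mulVec_transpose, hwdef, hxdef, mulVec_mulVec]
  have hKw : K.mulVec w = x := by
    rw [hwdef, mulVec_mulVec, Matrix.mul_nonsing_inv _ hKdet, one_mulVec]
  have htK : t = w ⬝ᵥ K.mulVec w := by
    rw [hKw, htx, dotProduct_comm]
  set z : Fin N → ℝ := B.mulVec w with hzdef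
  have hA₀w : w ⬝ᵥ (Bᵀ * M⁻¹ * B).mulVec w = z ⬝ᵥ (M⁻¹).mulVec z := by
    rw [← mulVec_mulVec, ← mulVec_mulVec, dotProduct_mulVec, ← mulVec_transpose,
      transpose_transpose, hzdef]
  set P : ℝ := z ⬝ᵥ (M⁻¹).mulVec z with hPdef
  have hKexp : t = ε * (w ⬝ᵥ A.mulVec w) + P := by
    rw [htK, hKdef, add_mulVec, dotProduct_add, smul_mulVec, dotProduct_smul,
      smul_eq_mul, hA₀w]
  have hbw := hbound w
  rw [hA₀w] at hbw
  -- so t ≥ (ε/d) P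
  have htP : (ε / d) * P ≤ t := by
    rw [hKexp]
    have hP0 : 0 ≤ P := by
      have := hMinv.posSemidef.dotProduct_mulVec_nonneg z; rwa [star_trivial] at this
    have hAw : P / d ≤ w ⬝ᵥ A.mulVec w := by
      rw [div_le_iff₀ hd]; linarith [hbw]
    have : (ε / d) * P = ε * (P / d) := by ring
    nlinarith
  -- z ⬝ᵥ v = t
  have hzv : z ⬝ᵥ v = t := by
    rw [htx, hzdef, dotProduct_comm, dotProduct_mulVec, ← mulVec_transpose, hxdef,
      dotProduct_comm]
  -- Cauchy-Schwarz style bound: P ≥ t²/m, via the vector z - (t/m) • M v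
  have hCS : 0 ≤ P - 2 * (t / m) * t + (t / m) ^ 2 * m := by
    have h0 := hMinv.posSemidef.dotProduct_mulVec_nonneg (z - (t / m) • M.mulVec v)
    rw [star_trivial] at h0
    have hMv : (M⁻¹).mulVec (M.mulVec v) = v := by
      rw [mulVec_mulVec, Matrix.nonsing_inv_mul _ hMdet, one_mulVec]
    have h1 : z ⬝ᵥ (M⁻¹).mulVec (M.mulVec v) = t := by rw [hMv, hzv]
    have h2 : (M.mulVec v) ⬝ᵥ (M⁻¹).mulVec z = t := by
      rw [symm_dot hMinv.1, hMv, hzv]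
    have h3 : (M.mulVec v) ⬝ᵥ (M⁻¹).mulVec (M.mulVec v) = m := by
      rw [hMv, dotProduct_comm]
    rw [mulVec_sub, mulVec_smul, dotProduct_sub, sub_dotProduct, sub_dotProduct,
      dotProduct_smul, dotProduct_smul, smul_dotProduct, smul_dotProduct,
      smul_eq_mul, smul_eq_mul, smul_eq_mul, smul_eq_mul, h1, h2, h3, ← hPdef] at h0
    nlinarith [h0]
  have hPt : t ^ 2 / m ≤ P := by
    have e1 : (t / m) ^ 2 * m = t ^ 2 / m := by field_simp
    have e2 : (t / m) * t = t ^ 2 / m := by field_simp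
    nlinarith [hCS, e1, e2]
  -- conclude t ≤ d m / ε
  have htm : t ≤ d * m / ε := by
    have h4 : ε / d * (t ^ 2 / m) ≤ t :=
      le_trans (mul_le_mul_of_nonneg_left hPt (le_of_lt (div_pos hε hd))) htP
    rcases eq_or_lt_of_le ht0 with h | h
    · rw [← h]; positivity
    · have hdm : 0 < d * m := mul_pos hd hm
      have h4' : ε * t ^ 2 / (d * m) ≤ t := by
        have e : ε * t ^ 2 / (d * m) = ε / d * (t ^ 2 / m) := by
          field_simp
        rw [e]; exact h4
      have h5 : ε * t ^ 2 ≤ t * (d * m) := (div_le_iff₀ hdm).mp h4'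
      rw [le_div_iff₀ hε]
      nlinarith [h5, h]
  -- final bound
  have hkey : c * t ≤ α ^ 2 * d / (c₀ * μ) * q := by
    have h5 : c * t ≤ c * (d * m / ε) :=
      mul_le_mul_of_nonneg_left htm hc.le
    have h6 : c * (d * m / ε) = α ^ 2 * d / (c₀ * μ) * ((ε / μ) * (c₀ * m)) := by
      rw [hcdef]; field_simp
    have h7 : α ^ 2 * d / (c₀ * μ) * ((ε / μ) * (c₀ * m)) ≤ α ^ 2 * d / (c₀ * μ) * q :=
      mul_le_mul_of_nonneg_left hqm (by positivity)
    linarith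
  have hfin : lam * q ≤ (1 + α ^ 2 * d / (c₀ * μ)) * q := by
    rw [add_mul, one_mul]; linarith
  exact le_of_mul_le_mul_right hfin hq
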